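/- Let B be a finite list of positive integral bids in [0,M]^n ∩ ℤ^n (each with positive integer weight), and consider demand along the line L_1 = {(z, M, ..., M) : 0 ≤ z ≤ M} perturbed to be non-marginal. The quantity of good 1 demanded, as a function of z, equals the total weight of bids b with b_1 > z (approximately; precisely, at the non-marginal point (z + 1/2, M+1/2, ..., M+1/2) each bid b demands good 1 iff b_1 > z and is rejected otherwise). Hence this demand function is monotonically non-increasing in z and changes value only at integers. -/

import Mathlib

/-- Utility of a bid `b` at price `p` for good `i`, where `none` is the reject good 0. -/
def util {n : ℕ} (b : Fin n → ℤ) (p : Fin n → ℝ) : Option (Fin n) → ℝ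
  | Option.none => 0
  | Option.some k => (b k : ℝ) - p k

/-- Bid `b` uniquely demands good `i` at price `p`. -/
def UDem {n : ℕ} (b : Fin n → ℤ) (p : Fin n → ℝ) (i : Option (Fin n)) : Prop :=
  ∀ j, j ≠ i → util b p j < util b p i

/-- The non-marginal price `(z + 1/2, M + 1/2, ..., M + 1/2)`. -/
noncomputable def P (n : ℕ) (M z : ℤ) : Fin n → ℝ := fun k =>
  if k.val = 0 then (z : ℝ) + 1 / 2 else (M : ℝ) + 1 / 2

theorem stmt_16 (n : ℕ) (hn : 0 < n) (M : ℤ) (ι : Type*) [DecidableEq ι]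
    (B : Finset ι) (bid : ι → Fin n → ℤ) (w : ι → ℤ)
    (hbounds : ∀ a ∈ B, ∀ k, 0 ≤ bid a k ∧ bid a k ≤ M)
    (hw : ∀ a ∈ B, 0 < w a) :
    (∀ z : ℤ, ∀ a ∈ B,
      (UDem (bid a) (P n M z) (some ⟨0, hn⟩) ↔ z < bid a ⟨0, hn⟩) ∧
      (bid a ⟨0, hn⟩ ≤ z → UDem (bid a) (P n M z) none)) ∧
    Antitone (fun z : ℤ => ∑ a ∈ B.filter (fun a => z < bid a ⟨0, hn⟩), w a) := by
  have key : ∀ z : ℤ, ∀ a ∈ B, ∀ k : Fin n, k ≠ ⟨0, hn⟩ →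
      util (bid a) (P n M z) (some k) ≤ -(1/2 : ℝ) := by
    intro z a ha k hk
    have hk0 : k.val ≠ 0 := fun h => hk (Fin.ext h)
    have hb := (hbounds a ha k).2
    simp only [util, P, if_neg hk0]
    have : (bid a k : ℝ) ≤ M := by exact_mod_cast hb
    linarith
  constructor
  · intro z a ha
    have hP0 : P n M z ⟨0, hn⟩ = (z : ℝ) + 1/2 := by simp [P]
    constructor
    · constructor
      · intro h
        have := h none (by simp)
        simp only [util, hP0] at this
        have : (z : ℝ) < bid a ⟨0, hn⟩ := by linarith
        exact_mod_cast this
      · intro hz j hj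
        have hz' : (z : ℝ) + 1 ≤ (bid a ⟨0, hn⟩ : ℝ) := by exact_mod_cast hz
        have h0 : (1/2 : ℝ) ≤ util (bid a) (P n M z) (some ⟨0, hn⟩) := by
          simp only [util, hP0]; linarith
        match j with
        | none => simp only [util]; linarith
        | some k =>
          have hk : k ≠ ⟨0, hn⟩ := fun h => hj (by rw [h])
          have := key z a ha k hk
          linarith
    · intro hz j hj
      have hz' : (bid a ⟨0, hn⟩ : ℝ) ≤ z := by exact_mod_cast hz
      match j with
      | none => exact absurd rfl hj
      | some k =>
        by_cases hk : k = ⟨0, hn⟩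
        · subst hk
          simp only [util, hP0]; linarith
        · have := key z a ha k hk
          simp only [util] at this ⊢; linarith
  · intro z₁ z₂ hz
    apply Finset.sum_le_sum_of_subset_of_nonneg
    · intro a ha
      simp only [Finset.mem_filter] at ha ⊢
      exact ⟨ha.1, lt_of_le_of_lt hz ha.2⟩
    · intro a ha _
      exact (hw a (Finset.mem_filter.mp ha).1).le
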